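/- Garbling the observation channel cannot decrease the value of a concave positively homogeneous functional of the unnormalized posterior (value of information): define Q : S → Z' → ℝ by Q s z' = ∑_{z ∈ Z} P s z · R z z'. Then for every prior p : S → ℝ with p s ≥ 0 for all s, ∑_{z' ∈ Z'} f( s ↦ p s · Q s z' ) ≥ ∑_{z ∈ Z} f( s ↦ p s · P s z ). -/

import Mathlib

lemma jensen_cone {S Z : Type*} [Fintype S] [Fintype Z]
    (f : (S → ℝ) → ℝ)
    (hconc : ConcaveOn ℝ {x : S → ℝ | ∀ s, 0 ≤ x s} f)
    (hhom : ∀ t : ℝ, 0 ≤ t → ∀ x : S → ℝ, (∀ s, 0 ≤ x s) → f (t • x) = t * f x)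
    (w : Z → ℝ) (hw : ∀ z, 0 ≤ w z)
    (x : Z → S → ℝ) (hx : ∀ z s, 0 ≤ x z s) :
    ∑ z, w z * f (x z) ≤ f (∑ z, w z • x z) := by
  set W := ∑ z, w z with hW
  rcases eq_or_lt_of_le (Finset.sum_nonneg (fun z _ => hw z) : (0:ℝ) ≤ W) with h0 | hpos
  · have hz : ∀ z, w z = 0 := by
      intro z
      have := (Finset.sum_eq_zero_iff_of_nonneg (fun z _ => hw z)).1 h0.symm
      exact this z (Finset.mem_univ z)
    have h1 : ∑ z, w z * f (x z) = 0 := by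
      apply Finset.sum_eq_zero; intro z _; rw [hz z, zero_mul]
    have h2 : (∑ z, w z • x z) = (0 : S → ℝ) := by
      apply Finset.sum_eq_zero; intro z _; rw [hz z, zero_smul]
    have hf0 : f 0 = 0 := by
      have := hhom 0 le_rfl 0 (fun s => le_rfl)
      simpa using this
    rw [h1, h2, hf0]
  · set w' : Z → ℝ := fun z => w z / W with hw'
    have hw'0 : ∀ z ∈ Finset.univ, 0 ≤ w' z := fun z _ => div_nonneg (hw z) hpos.le
    have hw'1 : ∑ z, w' z = 1 := by
      rw [hw', ← Finset.sum_div, ← hW, div_self hpos.ne']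
    have hmem : ∀ z ∈ Finset.univ, x z ∈ {x : S → ℝ | ∀ s, 0 ≤ x s} := fun z _ => hx z
    have hjen := hconc.le_map_sum hw'0 hw'1 hmem
    have hsum_mem : ∀ s, 0 ≤ (∑ z, w' z • x z) s := by
      intro s
      rw [Finset.sum_apply]
      exact Finset.sum_nonneg fun z _ => mul_nonneg (hw'0 z (Finset.mem_univ z)) (hx z s)
    have hkey : (∑ z, w z • x z) = W • ∑ z, w' z • x z := by
      rw [Finset.smul_sum]
      apply Finset.sum_congr rfl
      intro z _
      rw [smul_smul, hw']
      congr 1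
      field_simp
      exact (mul_div_cancel_right₀ _ hpos.ne').symm
    rw [hkey, hhom W hpos.le _ hsum_mem]
    calc ∑ z, w z * f (x z) = W * ∑ z, w' z * f (x z) := by
          rw [Finset.mul_sum]
          apply Finset.sum_congr rfl
          intro z _
          rw [hw']; field_simp
          exact (mul_div_cancel_right₀ _ hpos.ne').symm
      _ ≤ W * f (∑ z, w' z • x z) := by
          apply mul_le_mul_of_nonneg_left _ hpos.le
          simpa [smul_eq_mul] using hjen

/-- Value of information: garbling the observation channel `P` by a stochastic matrix
`R` cannot decrease the value of a concave, positively homogeneous functional `f` of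
the unnormalized posterior.  With `Q s z' = ∑ z, P s z * R z z'`, for every
nonnegative prior `p`,
`∑ z', f (s ↦ p s * Q s z') ≥ ∑ z, f (s ↦ p s * P s z)`. -/
theorem garbling_increases_value_of_information
    {S Z Z' : Type*} [Fintype S] [Nonempty S] [Fintype Z] [Nonempty Z]
    [Fintype Z'] [Nonempty Z']
    (P : S → Z → ℝ) (hP0 : ∀ s z, 0 ≤ P s z) (hP1 : ∀ s, ∑ z, P s z = 1)
    (R : Z → Z' → ℝ) (hR0 : ∀ z z', 0 ≤ R z z') (hR1 : ∀ z, ∑ z', R z z' = 1)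
    (f : (S → ℝ) → ℝ)
    (hconc : ConcaveOn ℝ {x : S → ℝ | ∀ s, 0 ≤ x s} f)
    (hhom : ∀ t : ℝ, 0 ≤ t → ∀ x : S → ℝ, (∀ s, 0 ≤ x s) → f (t • x) = t * f x)
    (Q : S → Z' → ℝ) (hQ : ∀ s z', Q s z' = ∑ z, P s z * R z z')
    (p : S → ℝ) (hp : ∀ s, 0 ≤ p s) :
    ∑ z, f (fun s => p s * P s z) ≤ ∑ z', f (fun s => p s * Q s z') := by
  set x : Z → S → ℝ := fun z s => p s * P s z with hx
  have hx0 : ∀ z s, 0 ≤ x z s := fun z s => mul_nonneg (hp s) (hP0 s z)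
  calc ∑ z, f (fun s => p s * P s z)
      = ∑ z, ∑ z', R z z' * f (x z) := by
        apply Finset.sum_congr rfl
        intro z _
        rw [← Finset.sum_mul, hR1 z, one_mul]
    _ = ∑ z', ∑ z, R z z' * f (x z) := Finset.sum_comm
    _ ≤ ∑ z', f (fun s => p s * Q s z') := by
        apply Finset.sum_le_sum
        intro z' _
        have h := jensen_cone f hconc hhom (fun z => R z z') (fun z => hR0 z z') x hx0
        have heq : (∑ z, R z z' • x z) = (fun s => p s * Q s z') := by
          funext s
          rw [Finset.sum_apply]
          simp only [Pi.smul_apply, smul_eq_mul, hQ, Finset.mul_sum]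
          apply Finset.sum_congr rfl
          intro z _
          ring
        rw [heq] at h
        exact h
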